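/- Let W be a nonempty finite type, m : Set W → ℝ a basic probability assignment (m(B) ≥ 0 for all B, m(∅) = 0, and the sum of m(B) over all B ⊆ W equals 1), and bel(A) := ∑_{B ⊆ A} m(B) the induced Dempster–Shafer belief function. Let ℰ be the set of minimal elements under set inclusion of {X ⊆ W | bel(X) > 0} (the elementary sets). Then for every A ⊆ W, bel(A) ≥ ∑_{E ∈ ℰ, E ⊆ A} bel(E): the belief of A is at least the sum of the beliefs of the elementary sets contained in A. -/

import Mathlib

open Classical

theorem bel_ge_sum_of_elementary_subsets (W : Type*) [Fintype W] [Nonempty W]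
    (m : Set W → ℝ)
    (hm_nonneg : ∀ B : Set W, 0 ≤ m B) (hm_empty : m ∅ = 0)
    (hm_total : ∑ B : Set W, m B = 1)
    (bel : Set W → ℝ)
    (hbel : ∀ A : Set W, bel A = ∑ B : Set W, if B ⊆ A then m B else 0) :
    ∀ A : Set W,
      ∑ E ∈ Finset.univ.filter
          (fun E : Set W => Minimal (fun X : Set W => bel X > 0) E ∧ E ⊆ A),
        bel E ≤ bel A := by
  intro A
  -- m B ≤ bel B
  have hmb : ∀ B : Set W, m B ≤ bel B := by
    intro B
    rw [hbel]
    have := Finset.single_le_sum (f := fun C : Set W => if C ⊆ B then m C else 0)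
      (fun C _ => by split <;> simp [hm_nonneg]) (Finset.mem_univ B)
    simpa using this
  -- for minimal E, bel E = m E
  have hmin : ∀ E : Set W, Minimal (fun X : Set W => bel X > 0) E → bel E = m E := by
    intro E hE
    rw [hbel]
    have key := Finset.sum_eq_single (s := Finset.univ)
      (f := fun B : Set W => if B ⊆ E then m B else 0) E ?h1 ?h2
    · simpa using key
    case h1 =>
      intro B _ hBE
      have : ¬ (B ⊆ E) ∨ m B = 0 := by
        by_contra h
        push_neg at h
        obtain ⟨hsub, hne⟩ := h
        have hmpos : 0 < m B := lt_of_le_of_ne (hm_nonneg B) (Ne.symm hne)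
        have hbpos : bel B > 0 := lt_of_lt_of_le hmpos (hmb B)
        exact hBE (le_antisymm hsub (hE.2 hbpos hsub))
      rcases this with h | h
      · simp [h]
      · simp [h]
    case h2 => simp
  calc ∑ E ∈ Finset.univ.filter
          (fun E : Set W => Minimal (fun X : Set W => bel X > 0) E ∧ E ⊆ A),
        bel E
      = ∑ E ∈ Finset.univ.filter
          (fun E : Set W => Minimal (fun X : Set W => bel X > 0) E ∧ E ⊆ A),
        m E := by
        apply Finset.sum_congr rfl
        intro E hEmem
        simp only [Finset.mem_filter] at hEmem
        exact hmin E hEmem.2.1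
    _ ≤ ∑ B : Set W, if B ⊆ A then m B else 0 := by
        rw [Finset.sum_filter]
        apply Finset.sum_le_sum
        intro B _
        by_cases h1 : Minimal (fun X : Set W => bel X > 0) B ∧ B ⊆ A
        · simp [h1, h1.2]
        · simp only [h1, if_false]
          split <;> simp [hm_nonneg]
    _ = bel A := (hbel A).symm
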